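/- For every n ≥ 6 and every solvable group Σ, the evaluation map (B_n →* Σ) → Σ sending a homomorphism F to F(σ_1) is a bijection; moreover every homomorphism F : B_n →* Σ satisfies F(σ_1) = F(σ_2) = ⋯ = F(σ_{n-1}) and has cyclic image. In particular |Hom(B_n, Σ)| = |Σ|. -/

import Mathlib

def braidRels (n : ℕ) : Set (FreeGroup (Fin (n - 1))) :=
  {r | (∃ i j : Fin (n - 1), 2 ≤ |(i : ℤ) - (j : ℤ)| ∧
        r = FreeGroup.of i * FreeGroup.of j * (FreeGroup.of i)⁻¹ * (FreeGroup.of j)⁻¹) ∨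
       (∃ i j : Fin (n - 1), |(i : ℤ) - (j : ℤ)| = 1 ∧
        r = FreeGroup.of i * FreeGroup.of j * FreeGroup.of i *
            (FreeGroup.of j)⁻¹ * (FreeGroup.of i)⁻¹ * (FreeGroup.of j)⁻¹)}

/-- The braid group `B n` on `n` strands, presented with generators `σ_1, …, σ_{n-1}`. -/
abbrev BraidGroup (n : ℕ) : Type := PresentedGroup (braidRels n)

/-- The generator `σ_{i+1}` of the braid group. -/
def braidGen {n : ℕ} (i : Fin (n - 1)) : BraidGroup n := PresentedGroup.of i

open scoped commutatorElement IsMulCommutative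

private lemma aux_e1 {T : Type*} [Group T] (a b s : T) :
    (a * s⁻¹) * (s * (b * s⁻¹) * s⁻¹) = a * b * (s⁻¹ * s⁻¹) := by group

private lemma aux_e2 {T : Type*} [Group T] (a b s : T) :
    (a * s⁻¹) * (s * (b * s⁻¹) * s⁻¹) * (s * (s * (a * s⁻¹) * s⁻¹) * s⁻¹)
      = a * b * a * (s⁻¹ * s⁻¹ * s⁻¹) := by group

private lemma aux_L1 {C : Type*} [CommGroup C] {a b X Y : C} (h : a * Y = b * X) :
    X / Y = a / b := by
  rw [div_eq_div_iff_mul_eq_mul, mul_comm X b]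
  exact h.symm

private lemma aux_L2 {C : Type*} [CommGroup C] {a b A B A2 B2 : C}
    (h : a * B * A2 = b * A * B2) : (b / a) * (B2 / A2) = B / A := by
  rw [div_mul_div_comm, div_eq_div_iff_mul_eq_mul, mul_right_comm b B2 A, ← h,
    mul_comm a B, mul_assoc]

private lemma aux_main {T : Type*} [Group T] (N : ℕ) (hN : 5 ≤ N) (σ : T) (E : Subgroup T)
    [E.Normal] [IsMulCommutative E] (g : ℕ → T) (hmem : ∀ i, i < N → g i * σ⁻¹ ∈ E)
    (hcomm : ∀ i j, i + 2 ≤ j → j < N → g i * g j = g j * g i)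
    (hbraid : ∀ i, i + 1 < N → g i * g (i + 1) * g i = g (i + 1) * g i * g (i + 1)) :
    ∀ i j, i < N → j < N → g i = g j := by
  classical
  set ν : ℕ → E := fun i => if h : i < N then ⟨g i * σ⁻¹, hmem i h⟩ else 1 with hν
  have hνcoe : ∀ i, i < N → (ν i : T) = g i * σ⁻¹ := by
    intro i h; simp [hν, dif_pos h]
  let c : ↥E →* ↥E := (MulAut.conjNormal (H := E) σ).toMonoidHom
  have hccoe : ∀ x : E, (c x : T) = σ * x * σ⁻¹ := fun x => MulAut.conjNormal_apply σ x
  have R1 : ∀ i j, i + 2 ≤ j → j < N → ν i * c (ν j) = ν j * c (ν i) := by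
    intro i j hij hj
    have hi : i < N := by omega
    apply Subtype.ext
    simp only [Subgroup.coe_mul, hccoe]
    rw [hνcoe i hi, hνcoe j hj, aux_e1, aux_e1, hcomm i j hij hj]
  have R2 : ∀ i, i + 1 < N →
      ν i * c (ν (i+1)) * c (c (ν i)) = ν (i+1) * c (ν i) * c (c (ν (i+1))) := by
    intro i hi
    apply Subtype.ext
    simp only [Subgroup.coe_mul, hccoe]
    rw [hνcoe i (by omega), hνcoe (i+1) hi, aux_e2, aux_e2, hbraid i hi]
  have hfd : ∀ i j, i + 2 ≤ j → j < N → c (ν j / ν i) = ν j / ν i := by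
    intro i j h1 h2
    rw [map_div]
    exact aux_L1 ((R1 i j h1 h2).symm)
  have hYfix : ∀ i, i + 1 < N → c (ν (i+1) / ν i) = ν (i+1) / ν i := by
    have key : ∀ k, k + 3 < N → c (ν (k+3) / ν (k+2)) = ν (k+3) / ν (k+2) := by
      intro k hk
      have e : ν (k+3) / ν (k+2) = (ν (k+3) / ν k) / (ν (k+2) / ν k) :=
        (div_div_div_cancel_right _ _ _).symm
      rw [e, map_div, hfd k (k+3) (by omega) hk, hfd k (k+2) (by omega) (by omega)]
    have hY2 : c (ν 3 / ν 2) = ν 3 / ν 2 := key 0 (by omega)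
    have hY1 : c (ν 2 / ν 1) = ν 2 / ν 1 := by
      have e : ν 2 / ν 1 = (ν 3 / ν 2)⁻¹ * (ν 3 / ν 1) := by
        rw [inv_div, div_mul_div_cancel]
      rw [e, map_mul, map_inv, hY2, hfd 1 3 (by omega) (by omega)]
    have hY0 : c (ν 1 / ν 0) = ν 1 / ν 0 := by
      have e : ν 1 / ν 0 = (ν 2 / ν 1)⁻¹ * (ν 2 / ν 0) := by
        rw [inv_div, div_mul_div_cancel]
      rw [e, map_mul, map_inv, hY1, hfd 0 2 (by omega) (by omega)]
    intro i hi
    match i with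
    | 0 => exact hY0
    | 1 => exact hY1
    | (k+2) => exact key k (by omega)
  have hb : ∀ i, i + 1 < N → (ν (i+1) / ν i) * c (c (ν (i+1) / ν i)) = c (ν (i+1) / ν i) := by
    intro i hi
    have h2 := aux_L2 (R2 i hi)
    rw [map_div, map_div] at *
    exact h2
  have hone : ∀ i, i + 1 < N → ν (i+1) = ν i := by
    intro i hi
    have h1 := hb i hi
    simp only [hYfix i hi] at h1
    have h2 : (ν (i+1) / ν i) * (ν (i+1) / ν i) = (ν (i+1) / ν i) * 1 := by
      rw [mul_one]; exact h1
    have h3 := mul_left_cancel h2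
    exact div_eq_one.mp h3
  have hν0 : ∀ i, i < N → ν i = ν 0 := by
    intro i
    induction i with
    | zero => intro _; rfl
    | succ k ih => intro hk; rw [hone k hk]; exact ih (by omega)
  intro i j hi hj
  have hij : ν i = ν j := (hν0 i hi).trans (hν0 j hj).symm
  have hc := congrArg (Subtype.val) hij
  rw [hνcoe i hi, hνcoe j hj] at hc
  exact mul_right_cancel hc

theorem hom_Bn_solvable (n : ℕ) (hn : 6 ≤ n) (S : Type) [Group S] [Group.IsSolvable S] :
    Function.Bijective (fun F : BraidGroup n →* S => F (braidGen ⟨0, by omega⟩)) ∧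
    (∀ F : BraidGroup n →* S,
      (∀ i j : Fin (n - 1), F (braidGen i) = F (braidGen j)) ∧ IsCyclic ↥F.range) ∧
    Nat.card (BraidGroup n →* S) = Nat.card S := by
  classical
  have hn0 : (0 : ℕ) < n - 1 := by omega
  -- relations in the braid group
  have hrel1 : ∀ i j : Fin (n-1), 2 ≤ |(i:ℤ) - (j:ℤ)| →
      braidGen (n := n) i * braidGen j = braidGen j * braidGen i := by
    intro i j h
    have hmem : (FreeGroup.of i * FreeGroup.of j * (FreeGroup.of i)⁻¹ * (FreeGroup.of j)⁻¹)
        ∈ Subgroup.normalClosure (braidRels n) :=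
      Subgroup.subset_normalClosure (Or.inl ⟨i, j, h, rfl⟩)
    have h1 : (⁅braidGen (n := n) i, braidGen j⁆ : BraidGroup n) = 1 := by
      rw [commutatorElement_def]
      have he : braidGen (n := n) i * braidGen j * (braidGen i)⁻¹ * (braidGen j)⁻¹ =
          PresentedGroup.mk (braidRels n)
            (FreeGroup.of i * FreeGroup.of j * (FreeGroup.of i)⁻¹ * (FreeGroup.of j)⁻¹) := by
        simp [braidGen, PresentedGroup.of]
      rw [he]
      exact (QuotientGroup.eq_one_iff _).mpr hmem
    exact commutatorElement_eq_one_iff_mul_comm.mp h1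
  have hrel2 : ∀ i j : Fin (n-1), |(i:ℤ) - (j:ℤ)| = 1 →
      braidGen (n := n) i * braidGen j * braidGen i
        = braidGen j * braidGen i * braidGen j := by
    intro i j h
    have hmem : (FreeGroup.of i * FreeGroup.of j * FreeGroup.of i *
        (FreeGroup.of j)⁻¹ * (FreeGroup.of i)⁻¹ * (FreeGroup.of j)⁻¹)
        ∈ Subgroup.normalClosure (braidRels n) :=
      Subgroup.subset_normalClosure (Or.inr ⟨i, j, h, rfl⟩)
    have h1 : braidGen (n := n) i * braidGen j * braidGen i *
        (braidGen j)⁻¹ * (braidGen i)⁻¹ * (braidGen j)⁻¹ = 1 := by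
      have he : braidGen (n := n) i * braidGen j * braidGen i *
          (braidGen j)⁻¹ * (braidGen i)⁻¹ * (braidGen j)⁻¹ =
          PresentedGroup.mk (braidRels n)
            (FreeGroup.of i * FreeGroup.of j * FreeGroup.of i *
              (FreeGroup.of j)⁻¹ * (FreeGroup.of i)⁻¹ * (FreeGroup.of j)⁻¹) := by
        simp [braidGen, PresentedGroup.of]
      rw [he]
      exact (QuotientGroup.eq_one_iff _).mpr hmem
    have h2 : (braidGen (n := n) i * braidGen j * braidGen i) *
        (braidGen j * braidGen i * braidGen j)⁻¹ = 1 := by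
      rw [← h1]; group
    exact mul_inv_eq_one.mp h2
  -- every homomorphism to S takes the same value on all generators
  have hsame : ∀ F : BraidGroup n →* S, ∀ i j : Fin (n-1),
      F (braidGen i) = F (braidGen j) := by
    intro F
    obtain ⟨m, hm⟩ := (inferInstance : Group.IsSolvable S).solvable
    set a : ℕ → S := fun k => if h : k < n - 1 then F (braidGen ⟨k, h⟩) else 1 with ha
    have haComm : ∀ i j : ℕ, i + 2 ≤ j → j < n-1 → a i * a j = a j * a i := by
      intro i j hij hj
      have hi : i < n - 1 := by omega
      have habs : 2 ≤ |((⟨i,hi⟩ : Fin (n-1)) : ℤ) - ((⟨j,hj⟩ : Fin (n-1)) : ℤ)| := by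
        simp only [Fin.val_mk]
        rw [abs_of_nonpos] <;> push_cast <;> omega
      simp only [ha, dif_pos hi, dif_pos hj, ← map_mul]
      rw [hrel1 ⟨i,hi⟩ ⟨j,hj⟩ habs]
    have haBr : ∀ i : ℕ, i + 1 < n-1 → a i * a (i+1) * a i = a (i+1) * a i * a (i+1) := by
      intro i hi1
      have hi : i < n - 1 := by omega
      have habs : |((⟨i,hi⟩ : Fin (n-1)) : ℤ) - ((⟨i+1,hi1⟩ : Fin (n-1)) : ℤ)| = 1 := by
        simp only [Fin.val_mk]
        rw [abs_of_nonpos] <;> push_cast <;> omega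
      simp only [ha, dif_pos hi, dif_pos hi1, ← map_mul]
      rw [hrel2 ⟨i,hi⟩ ⟨i+1,hi1⟩ habs]
    have key : ∀ K : ℕ, ∀ i j : ℕ, i < n-1 → j < n-1 →
        a i * (a j)⁻¹ ∈ derivedSeries S K := by
      intro K
      induction K with
      | zero =>
        intro i j _ _
        rw [derivedSeries_zero]
        exact Subgroup.mem_top _
      | succ k ih =>
        intro i j hi hj
        haveI hQn : (derivedSeries S (k+1)).Normal := derivedSeries_normal S (k+1)
        set π : S →* S ⧸ derivedSeries S (k+1) := QuotientGroup.mk' (derivedSeries S (k+1))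
          with hπ
        set E : Subgroup (S ⧸ derivedSeries S (k+1)) := (derivedSeries S k).map π with hE
        haveI hEn : E.Normal :=
          (derivedSeries_normal S k).map π (QuotientGroup.mk'_surjective _)
        haveI hEc : IsMulCommutative E := by
          constructor; constructor
          rintro ⟨x, hx⟩ ⟨y, hy⟩
          obtain ⟨u, hu, rfl⟩ := hx
          obtain ⟨v, hv, rfl⟩ := hy
          have hcm : ⁅π u, π v⁆ = 1 := by
            rw [← map_commutatorElement]
            refine (QuotientGroup.eq_one_iff _).mpr ?_
            rw [derivedSeries_succ]
            exact Subgroup.commutator_mem_commutator hu hv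
          apply Subtype.ext
          exact commutatorElement_eq_one_iff_mul_comm.mp hcm
        have hmem : ∀ i0, i0 < n-1 → π (a i0) * (π (a 0))⁻¹ ∈ E := by
          intro i0 hi0
          exact ⟨a i0 * (a 0)⁻¹, ih i0 0 hi0 hn0, by rw [map_mul, map_inv]⟩
        have hgc : ∀ i0 j0 : ℕ, i0 + 2 ≤ j0 → j0 < n-1 →
            π (a i0) * π (a j0) = π (a j0) * π (a i0) := by
          intro i0 j0 h1 h2
          rw [← map_mul, ← map_mul, haComm i0 j0 h1 h2]
        have hgb : ∀ i0 : ℕ, i0 + 1 < n-1 →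
            π (a i0) * π (a (i0+1)) * π (a i0)
              = π (a (i0+1)) * π (a i0) * π (a (i0+1)) := by
          intro i0 h1
          rw [← map_mul, ← map_mul, ← map_mul, ← map_mul, haBr i0 h1]
        have hall := aux_main (n-1) (by omega) (π (a 0)) E (fun i0 => π (a i0))
          hmem hgc hgb i j hi hj
        have h1 : π (a i * (a j)⁻¹) = 1 := by
          rw [map_mul, map_inv, hall, mul_inv_cancel]
        exact (QuotientGroup.eq_one_iff _).mp h1
    intro i j
    have h := key m i.val j.val i.isLt j.isLt
    rw [hm, Subgroup.mem_bot, mul_inv_eq_one] at h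
    simpa only [ha, dif_pos i.isLt, dif_pos j.isLt, Fin.eta] using h
  -- the three claims
  have hbij : Function.Bijective
      (fun F : BraidGroup n →* S => F (braidGen ⟨0, by omega⟩)) := by
    constructor
    · intro F G h
      refine PresentedGroup.ext fun x => ?_
      calc F (PresentedGroup.of x) = F (braidGen ⟨0, by omega⟩) := hsame F x _
        _ = G (braidGen ⟨0, by omega⟩) := h
        _ = G (PresentedGroup.of x) := (hsame G x _).symm
    · intro s
      have hs : ∀ r ∈ braidRels n, FreeGroup.lift (fun _ : Fin (n-1) => s) r = 1 := by
        rintro r (⟨i, j, -, rfl⟩ | ⟨i, j, -, rfl⟩) <;>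
          simp only [map_mul, map_inv, FreeGroup.lift_apply_of] <;> group
      refine ⟨PresentedGroup.toGroup hs, ?_⟩
      simp [braidGen, PresentedGroup.toGroup.of]
  refine ⟨hbij, fun F => ⟨hsame F, ?_⟩, Nat.card_eq_of_bijective _ hbij⟩
  · set s₀ : S := F (braidGen ⟨0, hn0⟩) with hs₀
    have hle : F.range ≤ Subgroup.zpowers s₀ := by
      rw [MonoidHom.range_eq_map, ← PresentedGroup.closure_range_of (braidRels n),
        MonoidHom.map_closure]
      refine (Subgroup.closure_le _).mpr ?_
      rintro _ ⟨_, ⟨x, rfl⟩, rfl⟩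
      exact (hsame F x ⟨0, hn0⟩) ▸ Subgroup.mem_zpowers s₀
    have hge : Subgroup.zpowers s₀ ≤ F.range := Subgroup.zpowers_le.mpr ⟨braidGen ⟨0, hn0⟩, rfl⟩
    have hr : F.range = Subgroup.zpowers s₀ := le_antisymm hle hge
    rw [hr]
    refine ⟨⟨⟨s₀, Subgroup.mem_zpowers _⟩, ?_⟩⟩
    rintro ⟨x, hx⟩
    obtain ⟨k, hk⟩ := Subgroup.mem_zpowers_iff.mp hx
    exact ⟨k, by ext; simp [hk]⟩
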